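/- Let L be an abstract logic, L' a fragment of L, 𝒞 a class of L-models, Θ = (Θ_M)_{M∈𝒞} an (L,𝒞)-pair, S ⊆ 𝒞 a finite set of L-models, and R an (L,S)-learning property. If some final L'-formula belongs to R, then some final L'-formula of size at most n^S_Θ := Σ_{τ∈𝒯} Π_{M∈S} |SEM_M(τ)| belongs to R. -/

import Mathlib

open scoped Classical

/-- The syntax of an abstract logic: a finite non-empty set of formula types `T`
with a non-empty set `Tf` of final types, and operator sets of arities 0, 1, 2
(with `Op0` non-empty), each operator having a type and allowed argument types. -/
structure AbsLogic where
  T : Type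
  [fintypeT : Fintype T]
  neT : Nonempty T
  Tf : Set T
  neTf : Tf.Nonempty
  Op0 : Type
  Op1 : Type
  Op2 : Type
  neOp0 : Nonempty Op0
  ty0 : Op0 → T
  ty1 : Op1 → T
  ty2 : Op2 → T
  arg1 : Op1 → Set T
  arg21 : Op2 → Set T
  arg22 : Op2 → Set T

attribute [instance] AbsLogic.fintypeT

/-- (Raw) formulas of an abstract logic. -/
inductive Fm (L : AbsLogic) : Type
  | op0 : L.Op0 → Fm L
  | op1 : L.Op1 → Fm L → Fm L
  | op2 : L.Op2 → Fm L → Fm L → Fm L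

namespace Fm

variable {L : AbsLogic}

/-- The type of a formula. -/
def typeOf : Fm L → L.T
  | op0 o => L.ty0 o
  | op1 o _ => L.ty1 o
  | op2 o _ _ => L.ty2 o

/-- Well-typedness: arguments of operators have allowed types. -/
def WT : Fm L → Prop
  | op0 _ => True
  | op1 o φ => WT φ ∧ typeOf φ ∈ L.arg1 o
  | op2 o φ ψ => WT φ ∧ WT ψ ∧ typeOf φ ∈ L.arg21 o ∧ typeOf ψ ∈ L.arg22 o

/-- The set of subformulas of a formula. -/
def Sub : Fm L → Set (Fm L)
  | op0 o => {op0 o}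
  | op1 o φ => insert (op1 o φ) (Sub φ)
  | op2 o φ ψ => insert (op2 o φ ψ) (Sub φ ∪ Sub ψ)

/-- The (syntax-DAG) size of a formula: its number of distinct subformulas. -/
noncomputable def sz (φ : Fm L) : ℕ := (Sub φ).ncard

end Fm

/-- A fragment of a logic: a subset of the operators of each arity. -/
structure Fragment (L : AbsLogic) where
  F0 : Set L.Op0
  F1 : Set L.Op1
  F2 : Set L.Op2

/-- A formula uses only operators of the fragment. -/
def InFrag {L : AbsLogic} (Fr : Fragment L) : Fm L → Prop
  | .op0 o => o ∈ Fr.F0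
  | .op1 o φ => o ∈ Fr.F1 ∧ InFrag Fr φ
  | .op2 o φ ψ => o ∈ Fr.F2 ∧ InFrag Fr φ ∧ InFrag Fr ψ

/-- A formula of the fragment `Fr`: well-typed, built from operators of `Fr`. -/
def IsFmOf {L : AbsLogic} (Fr : Fragment L) (φ : Fm L) : Prop := φ.WT ∧ InFrag Fr φ

/-- A class of `L`-models: structures with a satisfaction relation for formulas. -/
structure ModelClass (L : AbsLogic) where
  Model : Type
  sat : Model → Fm L → Prop

/-- An `(L,𝒞)`-pair: for every model `M`, a finite set of semantic values
`SEM M = ⋃ τ, SEM M τ` (pairwise disjoint over types) and a type-respecting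
semantic function `sem M`, which captures the `L`-semantics and satisfies the
inductive property. -/
structure LCPair (L : AbsLogic) (C : ModelClass L) where
  V : C.Model → Type
  SEM : (M : C.Model) → L.T → Set (V M)
  sem : (M : C.Model) → Fm L → V M
  finite_SEM : ∀ M τ, (SEM M τ).Finite
  disj_SEM : ∀ M (τ τ' : L.T), τ ≠ τ' → Disjoint (SEM M τ) (SEM M τ')
  typed : ∀ (M : C.Model) (φ : Fm L), φ.WT → sem M φ ∈ SEM M φ.typeOf
  captures : ∀ (M : C.Model) (φ φ' : Fm L), φ.WT → φ'.WT → φ.typeOf = φ'.typeOf →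
    φ.typeOf ∈ L.Tf → sem M φ = sem M φ' → (C.sat M φ ↔ C.sat M φ')
  ind1 : ∀ (M : C.Model) (o : L.Op1), ∃ f : V M → V M,
    ∀ φ : Fm L, φ.WT → φ.typeOf ∈ L.arg1 o → sem M (.op1 o φ) = f (sem M φ)
  ind2 : ∀ (M : C.Model) (o : L.Op2), ∃ f : V M → V M → V M,
    ∀ φ ψ : Fm L, φ.WT → ψ.WT → φ.typeOf ∈ L.arg21 o → ψ.typeOf ∈ L.arg22 o →
      sem M (.op2 o φ ψ) = f (sem M φ) (sem M ψ)

namespace Fm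

variable {L : AbsLogic}

theorem mem_Sub_self (φ : Fm L) : φ ∈ Sub φ := by
  cases φ <;> simp [Sub]

theorem Sub_finite (φ : Fm L) : (Sub φ).Finite := by
  induction φ with
  | op0 o => simpa [Sub] using Set.finite_singleton _
  | op1 o φ ih => exact ih.insert _
  | op2 o φ ψ ih1 ih2 => exact (ih1.union ih2).insert _

theorem Sub_subset {ψ φ : Fm L} (h : ψ ∈ Sub φ) : Sub ψ ⊆ Sub φ := by
  induction φ with
  | op0 o => simp only [Sub, Set.mem_singleton_iff] at h; subst h; rfl
  | op1 o φ ih =>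
    rcases (by simpa [Sub] using h : ψ = .op1 o φ ∨ ψ ∈ Sub φ) with rfl | h
    · rfl
    · exact (ih h).trans (Set.subset_insert _ _)
  | op2 o φ χ ih1 ih2 =>
    rcases (by simpa [Sub] using h : ψ = .op2 o φ χ ∨ ψ ∈ Sub φ ∨ ψ ∈ Sub χ) with rfl | h | h
    · rfl
    · exact (ih1 h).trans ((Set.subset_union_left).trans (Set.subset_insert _ _))
    · exact (ih2 h).trans ((Set.subset_union_right).trans (Set.subset_insert _ _))

theorem WT_of_mem_Sub {ψ φ : Fm L} (h : ψ ∈ Sub φ) (hWT : WT φ) : WT ψ := by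
  induction φ with
  | op0 o => simp only [Sub, Set.mem_singleton_iff] at h; subst h; exact hWT
  | op1 o φ ih =>
    rcases (by simpa [Sub] using h : ψ = .op1 o φ ∨ ψ ∈ Sub φ) with rfl | h
    · exact hWT
    · exact ih h hWT.1
  | op2 o φ χ ih1 ih2 =>
    rcases (by simpa [Sub] using h : ψ = .op2 o φ χ ∨ ψ ∈ Sub φ ∨ ψ ∈ Sub χ) with rfl | h | h
    · exact hWT
    · exact ih1 h hWT.1
    · exact ih2 h hWT.2.1

theorem InFrag_of_mem_Sub {Fr : Fragment L} {ψ φ : Fm L} (h : ψ ∈ Sub φ)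
    (hF : InFrag Fr φ) : InFrag Fr ψ := by
  induction φ with
  | op0 o => simp only [Sub, Set.mem_singleton_iff] at h; subst h; exact hF
  | op1 o φ ih =>
    rcases (by simpa [Sub] using h : ψ = .op1 o φ ∨ ψ ∈ Sub φ) with rfl | h
    · exact hF
    · exact ih h hF.2
  | op2 o φ χ ih1 ih2 =>
    rcases (by simpa [Sub] using h : ψ = .op2 o φ χ ∨ ψ ∈ Sub φ ∨ ψ ∈ Sub χ) with rfl | h | h
    · exact hF
    · exact ih1 h hF.2.1
    · exact ih2 h hF.2.2

/-- Constructor-count size, used to prove antisymmetry of the subformula relation. -/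
def csz : Fm L → ℕ
  | op0 _ => 1
  | op1 _ φ => csz φ + 1
  | op2 _ φ ψ => csz φ + csz ψ + 1

theorem csz_lt_of_mem_Sub {ψ φ : Fm L} (h : ψ ∈ Sub φ) : ψ = φ ∨ csz ψ < csz φ := by
  induction φ with
  | op0 o => simp only [Sub, Set.mem_singleton_iff] at h; exact Or.inl h
  | op1 o φ ih =>
    rcases (by simpa [Sub] using h : ψ = .op1 o φ ∨ ψ ∈ Sub φ) with rfl | h
    · exact Or.inl rfl
    · refine Or.inr ?_
      rcases ih h with rfl | h' <;> simp [csz] at * <;> omega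
  | op2 o φ χ ih1 ih2 =>
    rcases (by simpa [Sub] using h : ψ = .op2 o φ χ ∨ ψ ∈ Sub φ ∨ ψ ∈ Sub χ) with rfl | h | h
    · exact Or.inl rfl
    · refine Or.inr ?_
      rcases ih1 h with rfl | h' <;> simp [csz] at * <;> omega
    · refine Or.inr ?_
      rcases ih2 h with rfl | h' <;> simp [csz] at * <;> omega

theorem Sub_antisymm {α β : Fm L} (hne : α ≠ β) (h : α ∈ Sub β) : β ∉ Sub α := by
  intro h'
  rcases csz_lt_of_mem_Sub h with rfl | h1
  · exact hne rfl
  rcases csz_lt_of_mem_Sub h' with rfl | h2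
  · exact hne rfl
  omega

end Fm

namespace FmSubst

open Fm

variable {L : AbsLogic}

/-- Substitute `α` for every occurrence of `β`. -/
noncomputable def subst (β α : Fm L) : Fm L → Fm L
  | .op0 o => if Fm.op0 o = β then α else .op0 o
  | .op1 o φ => if Fm.op1 o φ = β then α else .op1 o (subst β α φ)
  | .op2 o φ ψ => if Fm.op2 o φ ψ = β then α else .op2 o (subst β α φ) (subst β α ψ)

theorem subst_self (β α : Fm L) : subst β α β = α := by
  cases β <;> simp [subst]

theorem subst_eq_self {β α φ : Fm L} (h : β ∉ Fm.Sub φ) : subst β α φ = φ := by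
  induction φ with
  | op0 o =>
    have : Fm.op0 o ≠ β := fun he => h (he ▸ mem_Sub_self _)
    simp [subst, this]
  | op1 o φ ih =>
    have h1 : Fm.op1 o φ ≠ β := fun he => h (he ▸ mem_Sub_self _)
    have h2 : β ∉ Fm.Sub φ := fun hb => h (by simp [Fm.Sub]; exact Or.inr hb)
    simp [subst, h1, ih h2]
  | op2 o φ ψ ih1 ih2 =>
    have h1 : Fm.op2 o φ ψ ≠ β := fun he => h (he ▸ mem_Sub_self _)
    have h2 : β ∉ Fm.Sub φ := fun hb => h (by simp [Fm.Sub]; exact Or.inr (Or.inl hb))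
    have h3 : β ∉ Fm.Sub ψ := fun hb => h (by simp [Fm.Sub]; exact Or.inr (Or.inr hb))
    simp [subst, h1, ih1 h2, ih2 h3]

variable {β α : Fm L} (hty : α.typeOf = β.typeOf)

include hty in
theorem typeOf_subst (φ : Fm L) : (subst β α φ).typeOf = φ.typeOf := by
  induction φ with
  | op0 o =>
    by_cases h : Fm.op0 o = β
    · rw [subst, if_pos h, hty, h]
    · simp only [subst, if_neg h]
  | op1 o φ ih =>
    by_cases h : Fm.op1 o φ = β
    · rw [subst, if_pos h, hty, h]
    · simp only [subst, if_neg h, typeOf]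
  | op2 o φ ψ ih1 ih2 =>
    by_cases h : Fm.op2 o φ ψ = β
    · rw [subst, if_pos h, hty, h]
    · simp only [subst, if_neg h, typeOf]

include hty in
theorem WT_subst (hα : α.WT) {φ : Fm L} (hφ : φ.WT) : (subst β α φ).WT := by
  induction φ with
  | op0 o => by_cases h : Fm.op0 o = β <;> simp [subst, h, hα, WT]
  | op1 o φ ih =>
    by_cases h : Fm.op1 o φ = β
    · simpa [subst, h] using hα
    · exact by
        simp only [subst, h, if_false, WT]
        exact ⟨ih hφ.1, by rw [typeOf_subst hty]; exact hφ.2⟩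
  | op2 o φ ψ ih1 ih2 =>
    by_cases h : Fm.op2 o φ ψ = β
    · simpa [subst, h] using hα
    · exact by
        simp only [subst, h, if_false, WT]
        exact ⟨ih1 hφ.1, ih2 hφ.2.1, by rw [typeOf_subst hty]; exact hφ.2.2.1,
          by rw [typeOf_subst hty]; exact hφ.2.2.2⟩

theorem InFrag_subst {Fr : Fragment L} (hα : InFrag Fr α) {φ : Fm L} (hφ : InFrag Fr φ) :
    InFrag Fr (subst β α φ) := by
  induction φ with
  | op0 o => by_cases h : Fm.op0 o = β <;> simp [subst, h, hα, InFrag] <;> exact hφ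
  | op1 o φ ih =>
    by_cases h : Fm.op1 o φ = β
    · simpa [subst, h] using hα
    · simp only [subst, h, if_false, InFrag]
      exact ⟨hφ.1, ih hφ.2⟩
  | op2 o φ ψ ih1 ih2 =>
    by_cases h : Fm.op2 o φ ψ = β
    · simpa [subst, h] using hα
    · simp only [subst, h, if_false, InFrag]
      exact ⟨hφ.1, ih1 hφ.2.1, ih2 hφ.2.2⟩

theorem Sub_subst (φ : Fm L) :
    Fm.Sub (subst β α φ) ⊆ subst β α '' Fm.Sub φ ∪ Fm.Sub α := by
  induction φ with
  | op0 o =>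
    by_cases h : Fm.op0 o = β
    · simp [subst, h]
    · intro x hx
      simp only [subst, h, if_false, Fm.Sub, Set.mem_singleton_iff] at hx
      subst hx
      exact Or.inl ⟨.op0 o, mem_Sub_self _, by simp [subst, h]⟩
  | op1 o φ ih =>
    by_cases h : Fm.op1 o φ = β
    · simp [subst, h]
    · intro x hx
      simp only [subst, h, if_false, Fm.Sub, Set.mem_insert_iff] at hx
      rcases hx with rfl | hx
      · exact Or.inl ⟨.op1 o φ, mem_Sub_self _, by simp [subst, h]⟩
      · rcases ih hx with ⟨ψ, hψ, rfl⟩ | hx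
        · exact Or.inl ⟨ψ, by simp [Fm.Sub]; exact Or.inr hψ, rfl⟩
        · exact Or.inr hx
  | op2 o φ χ ih1 ih2 =>
    by_cases h : Fm.op2 o φ χ = β
    · simp [subst, h]
    · intro x hx
      simp only [subst, h, if_false, Fm.Sub, Set.mem_insert_iff, Set.mem_union] at hx
      rcases hx with rfl | hx | hx
      · exact Or.inl ⟨.op2 o φ χ, mem_Sub_self _, by simp [subst, h]⟩
      · rcases ih1 hx with ⟨ψ, hψ, rfl⟩ | hx
        · exact Or.inl ⟨ψ, by simp [Fm.Sub]; exact Or.inr (Or.inl hψ), rfl⟩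
        · exact Or.inr hx
      · rcases ih2 hx with ⟨ψ, hψ, rfl⟩ | hx
        · exact Or.inl ⟨ψ, by simp [Fm.Sub]; exact Or.inr (Or.inr hψ), rfl⟩
        · exact Or.inr hx

include hty in
theorem sem_subst {C : ModelClass L} (Θ : LCPair L C) (M : C.Model)
    (hα : α.WT) (hsem : Θ.sem M α = Θ.sem M β) {φ : Fm L} (hφ : φ.WT) :
    Θ.sem M (subst β α φ) = Θ.sem M φ := by
  induction φ with
  | op0 o =>
    by_cases h : Fm.op0 o = β
    · rw [subst, if_pos h, hsem, h]
    · rw [subst, if_neg h]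
  | op1 o φ ih =>
    by_cases h : Fm.op1 o φ = β
    · rw [subst, if_pos h, hsem, h]
    · rw [subst, if_neg h]
      obtain ⟨f, hf⟩ := Θ.ind1 M o
      rw [hf _ (WT_subst hty hα hφ.1) (by rw [typeOf_subst hty]; exact hφ.2),
        ih hφ.1, ← hf _ hφ.1 hφ.2]
  | op2 o φ ψ ih1 ih2 =>
    by_cases h : Fm.op2 o φ ψ = β
    · rw [subst, if_pos h, hsem, h]
    · rw [subst, if_neg h]
      obtain ⟨f, hf⟩ := Θ.ind2 M o
      rw [hf _ _ (WT_subst hty hα hφ.1) (WT_subst hty hα hφ.2.1)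
          (by rw [typeOf_subst hty]; exact hφ.2.2.1)
          (by rw [typeOf_subst hty]; exact hφ.2.2.2),
        ih1 hφ.1, ih2 hφ.2.1, ← hf _ _ hφ.1 hφ.2.1 hφ.2.2.1 hφ.2.2.2]

end FmSubst
open Fm FmSubst in
theorem count_bound {L : AbsLogic} {C : ModelClass L} (Θ : LCPair L C) (S : Finset C.Model)
    (φ : Fm L) (hWT : φ.WT)
    (hinj : Set.InjOn (fun ψ : Fm L => (ψ.typeOf, fun M : S => Θ.sem M.1 ψ)) (Fm.Sub φ)) :
    φ.sz ≤ ∑ τ : L.T, ∏ M ∈ S, (Θ.SEM M τ).ncard := by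
  classical
  set F := (Fm.Sub_finite φ).toFinset with hF
  have hsz : φ.sz = F.card := by
    rw [Fm.sz, Set.ncard_eq_toFinset_card _ (Fm.Sub_finite φ)]
  have hfib : F.card = ∑ τ : L.T, (F.filter fun ψ => ψ.typeOf = τ).card :=
    Finset.card_eq_sum_card_fiberwise (fun x _ => Finset.mem_univ x.typeOf)
  rw [hsz, hfib]
  refine Finset.sum_le_sum fun τ _ => ?_
  set t : Set ((M : S) → Θ.V M.1) := Set.pi Set.univ fun M => Θ.SEM M.1 τ with ht
  have htfin : t.Finite := Set.Finite.pi fun M => Θ.finite_SEM M.1 τ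
  have hmem : ∀ ψ ∈ (F.filter fun ψ => ψ.typeOf = τ : Finset (Fm L)),
      (fun M : S => Θ.sem M.1 ψ) ∈ t := by
    intro ψ hψ
    rw [Finset.mem_filter] at hψ
    obtain ⟨hψF, hψτ⟩ := hψ
    have hψS : ψ ∈ Fm.Sub φ := by simpa [hF] using hψF
    intro M _
    have := Θ.typed M.1 ψ (Fm.WT_of_mem_Sub hψS hWT)
    rwa [hψτ] at this
  have hinj' : Set.InjOn (fun ψ : Fm L => fun M : S => Θ.sem M.1 ψ)
      (↑(F.filter fun ψ => ψ.typeOf = τ) : Set (Fm L)) := by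
    intro x hx y hy hxy
    simp only [Finset.coe_filter, Set.mem_setOf_eq] at hx hy
    have hxS : x ∈ Fm.Sub φ := by simpa [hF] using hx.1
    have hyS : y ∈ Fm.Sub φ := by simpa [hF] using hy.1
    have := hinj hxS hyS (by simp [hx.2, hy.2, hxy])
    exact this
  have hcard : ((F.filter fun ψ => ψ.typeOf = τ : Finset (Fm L)) : Set (Fm L)).ncard ≤ t.ncard :=
    Set.ncard_le_ncard_of_injOn _ (by simpa using hmem) hinj' htfin
  rw [Set.ncard_coe_finset] at hcard
  refine hcard.trans_eq ?_
  rw [← Nat.card_coe_set_eq, Nat.card_congr (Equiv.Set.univPi _), Nat.card_pi]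
  rw [← Finset.prod_coe_sort S (fun M => (Θ.SEM M τ).ncard)]
  exact Finset.prod_congr rfl fun M _ => Nat.card_coe_set_eq _

open FmSubst in
theorem replace_step {L : AbsLogic} {C : ModelClass L} (Θ : LCPair L C)
    (Fr : Fragment L) (S : Finset C.Model) (R : Set (Fm L))
    (hlearn : ∀ φ : Fm L, φ.WT → φ.typeOf ∈ L.Tf →
      (({M : C.Model | M ∈ S ∧ C.sat M φ} ∈
          {X : Set C.Model | ∃ ψ ∈ R, X = {M : C.Model | M ∈ S ∧ C.sat M ψ}}) ↔ φ ∈ R))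
    {φ α β : Fm L} (hfm : IsFmOf Fr φ) (hTf : φ.typeOf ∈ L.Tf) (hR : φ ∈ R)
    (hα : α ∈ Fm.Sub φ) (hβ : β ∈ Fm.Sub φ) (hne : α ≠ β) (hβα : β ∉ Fm.Sub α)
    (hty : α.typeOf = β.typeOf) (hsem : ∀ M ∈ S, Θ.sem M α = Θ.sem M β) :
    ∃ φ' : Fm L, IsFmOf Fr φ' ∧ φ'.typeOf ∈ L.Tf ∧ φ' ∈ R ∧ φ'.sz < φ.sz := by
  obtain ⟨hWT, hIF⟩ := hfm
  have hαWT : α.WT := Fm.WT_of_mem_Sub hα hWT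
  have hαIF : InFrag Fr α := Fm.InFrag_of_mem_Sub hα hIF
  set φ' := subst β α φ with hφ'
  have hWT' : φ'.WT := WT_subst hty hαWT hWT
  have htyeq : φ'.typeOf = φ.typeOf := typeOf_subst hty φ
  have hTf' : φ'.typeOf ∈ L.Tf := htyeq ▸ hTf
  -- size decreases
  have hsubset : Fm.Sub φ' ⊆ subst β α '' (Fm.Sub φ \ {β}) := by
    intro x hx
    rcases Sub_subst φ hx with ⟨ψ, hψ, rfl⟩ | hx
    · by_cases hψβ : ψ = β
      · subst hψβ
        refine ⟨α, ⟨hα, hne⟩, ?_⟩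
        rw [subst_eq_self hβα, subst_self]
      · exact ⟨ψ, ⟨hψ, hψβ⟩, rfl⟩
    · have hxα : x ∈ Fm.Sub α := hx
      have hxφ : x ∈ Fm.Sub φ := Fm.Sub_subset hα hxα
      have hxβ : x ≠ β := fun he => hβα (he ▸ hxα)
      exact ⟨x, ⟨hxφ, hxβ⟩, subst_eq_self fun hb => hβα (Fm.Sub_subset hxα hb)⟩
  have hsz : φ'.sz < φ.sz := by
    have hfin : (Fm.Sub φ).Finite := Fm.Sub_finite φ
    calc φ'.sz ≤ (subst β α '' (Fm.Sub φ \ {β})).ncard :=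
          Set.ncard_le_ncard hsubset ((hfin.diff).image _)
      _ ≤ (Fm.Sub φ \ {β}).ncard := Set.ncard_image_le (hfin.diff)
      _ < (Fm.Sub φ).ncard := Set.ncard_diff_singleton_lt_of_mem hβ hfin
  -- same satisfaction on S
  have hsat : ∀ M ∈ S, (C.sat M φ' ↔ C.sat M φ) := fun M hM =>
    Θ.captures M φ' φ hWT' hWT htyeq hTf' (sem_subst hty Θ M hαWT (hsem M hM) hWT)
  have hseteq : {M : C.Model | M ∈ S ∧ C.sat M φ'} = {M : C.Model | M ∈ S ∧ C.sat M φ} := by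
    ext M
    exact and_congr_right fun hM => hsat M hM
  have hR' : φ' ∈ R := (hlearn φ' hWT' hTf').mp ⟨φ, hR, hseteq⟩
  exact ⟨φ', ⟨hWT', InFrag_subst hαIF hIF⟩, hTf', hR', hsz⟩

theorem descent {L : AbsLogic} {C : ModelClass L} (Θ : LCPair L C)
    (Fr : Fragment L) (S : Finset C.Model) (R : Set (Fm L))
    (hlearn : ∀ φ : Fm L, φ.WT → φ.typeOf ∈ L.Tf →
      (({M : C.Model | M ∈ S ∧ C.sat M φ} ∈
          {X : Set C.Model | ∃ ψ ∈ R, X = {M : C.Model | M ∈ S ∧ C.sat M ψ}}) ↔ φ ∈ R)) :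
    ∀ n : ℕ, ∀ φ : Fm L, φ.sz < n → IsFmOf Fr φ → φ.typeOf ∈ L.Tf → φ ∈ R →
      ∃ φ' : Fm L, IsFmOf Fr φ' ∧ φ'.typeOf ∈ L.Tf ∧ φ' ∈ R ∧
        φ'.sz ≤ ∑ τ : L.T, ∏ M ∈ S, (Θ.SEM M τ).ncard := by
  intro n
  induction n with
  | zero => intro φ h; omega
  | succ m ih =>
    intro φ hn hfm hTf hR
    by_cases hinj : Set.InjOn (fun ψ : Fm L => (ψ.typeOf, fun M : S => Θ.sem M.1 ψ)) (Fm.Sub φ)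
    · exact ⟨φ, hfm, hTf, hR, count_bound Θ S φ hfm.1 hinj⟩
    · rw [Set.InjOn] at hinj
      push_neg at hinj
      obtain ⟨α, hα, β, hβ, hkey, hne⟩ := hinj
      simp only [Prod.mk.injEq] at hkey
      have hty : α.typeOf = β.typeOf := hkey.1
      have hsem : ∀ M ∈ S, Θ.sem M α = Θ.sem M β := fun M hM =>
        congrFun hkey.2 ⟨M, hM⟩
      have hstep : ∃ φ' : Fm L, IsFmOf Fr φ' ∧ φ'.typeOf ∈ L.Tf ∧ φ' ∈ R ∧ φ'.sz < φ.sz := by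
        by_cases hβα : β ∈ Fm.Sub α
        · exact replace_step Θ Fr S R hlearn hfm hTf hR hβ hα hne.symm
            (Fm.Sub_antisymm hne.symm hβα) hty.symm fun M hM => (hsem M hM).symm
        · exact replace_step Θ Fr S R hlearn hfm hTf hR hα hβ hne hβα hty hsem
      obtain ⟨φ', hfm', hTf', hR', hsz'⟩ := hstep
      exact ih φ' (by omega) hfm' hTf' hR'
/-- **Theorem (learning properties).** Let `R` be an `(L,S)`-learning property:
a set of final `L`-formulas such that whether a final formula belongs to `R`
depends only on the set of models of `S` satisfying it.  If some final formula of
the fragment `Fr` belongs to `R`, then one of size at most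
`∑ τ, ∏_{M ∈ S} |SEM M τ|` does. -/
theorem size_learning_property
    (L : AbsLogic) (C : ModelClass L) (Θ : LCPair L C) (Fr : Fragment L)
    (S : Finset C.Model) (R : Set (Fm L))
    (hRfinal : ∀ φ ∈ R, Fm.WT φ ∧ Fm.typeOf φ ∈ L.Tf)
    (hlearn : ∀ φ : Fm L, φ.WT → φ.typeOf ∈ L.Tf →
      (({M : C.Model | M ∈ S ∧ C.sat M φ} ∈
          {X : Set C.Model | ∃ ψ ∈ R, X = {M : C.Model | M ∈ S ∧ C.sat M ψ}}) ↔ φ ∈ R)) :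
    (∃ φ : Fm L, IsFmOf Fr φ ∧ φ.typeOf ∈ L.Tf ∧ φ ∈ R) →
      ∃ φ : Fm L, IsFmOf Fr φ ∧ φ.typeOf ∈ L.Tf ∧ φ ∈ R ∧
        φ.sz ≤ ∑ τ : L.T, ∏ M ∈ S, (Θ.SEM M τ).ncard := by

  intro ⟨φ, hfm, hTf, hR⟩
  exact descent Θ Fr S R hlearn (φ.sz + 1) φ (by omega) hfm hTf hR
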